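/- Let ℓ₁ and ℓ₂ be closed subspaces of a real Hilbert space H and let P₁ denote the orthogonal projection of H onto ℓ₁^⊥. Then (ℓ₁, ℓ₂) is a Fredholm pair if and only if the restriction P₁|_{ℓ₂} : ℓ₂ → ℓ₁^⊥ is a Fredholm operator; moreover in that case ker(P₁|_{ℓ₂}) = ℓ₁ ∩ ℓ₂ and dim(ℓ₁^⊥ / P₁(ℓ₂)) = dim(H / (ℓ₁ + ℓ₂)), so the Fredholm index of P₁|_{ℓ₂} equals dim(ℓ₁ ∩ ℓ₂) − dim(H / (ℓ₁ + ℓ₂)). -/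

import Mathlib

open scoped RealInnerProductSpace

/-- A pair of closed subspaces is a Fredholm pair if their intersection is finite-dimensional
and their sum is closed and of finite codimension. -/
def IsFredholmPair {H : Type*} [NormedAddCommGroup H] [InnerProductSpace ℝ H]
    (μ ν : Submodule ℝ H) : Prop :=
  FiniteDimensional ℝ ↥(μ ⊓ ν) ∧ IsClosed ((μ ⊔ ν : Submodule ℝ H) : Set H) ∧
    FiniteDimensional ℝ (H ⧸ (μ ⊔ ν))

/-- `(ℓ₁, ℓ₂)` is a Fredholm pair iff the restriction to `ℓ₂` of the orthogonal projection
onto `ℓ₁ᗮ` is a Fredholm operator; its kernel is `ℓ₁ ∩ ℓ₂`, the dimension of its cokernel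
equals `dim (H / (ℓ₁ + ℓ₂))`, and its index is `dim (ℓ₁ ∩ ℓ₂) − dim (H / (ℓ₁ + ℓ₂))`. -/
theorem fredholmPair_iff_projection_restriction_fredholm
    {H : Type*} [NormedAddCommGroup H] [InnerProductSpace ℝ H] [CompleteSpace H]
    (l₁ l₂ : Submodule ℝ H) (hl₁ : IsClosed (l₁ : Set H)) (hl₂ : IsClosed (l₂ : Set H))
    (P₁ : H →L[ℝ] H)
    (hPsa : ∀ x y : H, ⟪P₁ x, y⟫ = ⟪x, P₁ y⟫) (hPidem : P₁.comp P₁ = P₁)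
    (hPrange : LinearMap.range (P₁ : H →ₗ[ℝ] H) = l₁ᗮ)
    (T : ↥l₂ →L[ℝ] ↥(l₁ᗮ)) (hT : ∀ x : ↥l₂, (T x : H) = P₁ x) :
    (IsFredholmPair l₁ l₂ ↔
        (FiniteDimensional ℝ ↥(LinearMap.ker (T : ↥l₂ →ₗ[ℝ] ↥(l₁ᗮ))) ∧
          IsClosed ((LinearMap.range (T : ↥l₂ →ₗ[ℝ] ↥(l₁ᗮ)) : Submodule ℝ ↥(l₁ᗮ)) : Set ↥(l₁ᗮ)) ∧
          FiniteDimensional ℝ (↥(l₁ᗮ) ⧸ LinearMap.range (T : ↥l₂ →ₗ[ℝ] ↥(l₁ᗮ))))) ∧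
    LinearMap.ker (T : ↥l₂ →ₗ[ℝ] ↥(l₁ᗮ)) = (l₁ ⊓ l₂).comap l₂.subtype ∧
    Module.rank ℝ (↥(l₁ᗮ) ⧸ LinearMap.range (T : ↥l₂ →ₗ[ℝ] ↥(l₁ᗮ))) = Module.rank ℝ (H ⧸ (l₁ ⊔ l₂)) ∧
    (IsFredholmPair l₁ l₂ →
      (Module.finrank ℝ ↥(LinearMap.ker (T : ↥l₂ →ₗ[ℝ] ↥(l₁ᗮ))) : ℤ)
          - (Module.finrank ℝ (↥(l₁ᗮ) ⧸ LinearMap.range (T : ↥l₂ →ₗ[ℝ] ↥(l₁ᗮ))) : ℤ)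
        = (Module.finrank ℝ ↥(l₁ ⊓ l₂) : ℤ)
          - (Module.finrank ℝ (H ⧸ (l₁ ⊔ l₂)) : ℤ)) := by
  classical
  -- basic consequences of the hypotheses on `P₁`
  have hPP : ∀ x : H, P₁ (P₁ x) = P₁ x := fun x => by
    have := ContinuousLinearMap.ext_iff.mp hPidem x
    simpa using this
  have hmem : ∀ x : H, P₁ x ∈ l₁ᗮ := fun x => by
    rw [← hPrange]; exact ⟨x, rfl⟩
  have hfix : ∀ z : H, z ∈ l₁ᗮ → P₁ z = z := by
    intro z hz
    rw [← hPrange] at hz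
    obtain ⟨w, rfl⟩ := hz
    exact hPP w
  have hl₁dd : l₁ᗮᗮ = l₁ := by
    rw [Submodule.orthogonal_orthogonal_eq_closure]
    exact hl₁.submodule_topologicalClosure_eq
  -- the kernel of `P₁` is `l₁`
  have hker : LinearMap.ker (P₁ : H →ₗ[ℝ] H) = l₁ := by
    ext x
    simp only [LinearMap.mem_ker]
    constructor
    · intro hx
      rw [← hl₁dd, Submodule.mem_orthogonal]
      intro u hu
      obtain ⟨z, rfl⟩ := (hPrange ▸ hu : u ∈ LinearMap.range (P₁ : H →ₗ[ℝ] H))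
      calc ⟪P₁ z, x⟫ = ⟪z, P₁ x⟫ := hPsa z x
        _ = 0 := by rw [ContinuousLinearMap.coe_coe] at hx; rw [hx, inner_zero_right]
    · intro hx
      have h0 : ⟪P₁ x, P₁ x⟫ = 0 := by
        rw [hPsa x (P₁ x), hPP]
        exact ((Submodule.mem_orthogonal _ _).mp (hmem x)) x hx
      exact inner_self_eq_zero.mp h0
  -- membership in the sum
  have hsum : ∀ x : H, x ∈ l₁ ⊔ l₂ ↔ ∃ y ∈ l₂, P₁ y = P₁ x := by
    intro x
    constructor
    · intro hx
      obtain ⟨a, ha, b, hb, rfl⟩ := Submodule.mem_sup.mp hx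
      refine ⟨b, hb, ?_⟩
      have ha0 : P₁ a = 0 := by rw [← ContinuousLinearMap.coe_coe P₁, ← LinearMap.mem_ker (f := (P₁ : H →ₗ[ℝ] H)), hker]; exact ha
      simp [map_add, ha0]
    · rintro ⟨y, hy, hxy⟩
      have : x - y ∈ l₁ := by
        rw [← hker, LinearMap.mem_ker, map_sub, ContinuousLinearMap.coe_coe, hxy, sub_self]
      have hx : x = (x - y) + y := by abel
      exact hx ▸ Submodule.add_mem_sup this hy
  -- description of the range of `T`
  have hrange : ∀ x : ↥(l₁ᗮ), x ∈ LinearMap.range (T : ↥l₂ →ₗ[ℝ] ↥(l₁ᗮ)) ↔ (x : H) ∈ l₁ ⊔ l₂ := by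
    intro x
    rw [hsum, hfix _ x.2]
    constructor
    · rintro ⟨y, rfl⟩
      exact ⟨y, y.2, (hT y).symm⟩
    · rintro ⟨y, hy, hxy⟩
      exact ⟨⟨y, hy⟩, by ext; rw [ContinuousLinearMap.coe_coe, hT]; exact hxy⟩
  have hPsup : ∀ x : H, P₁ x ∈ l₁ ⊔ l₂ ↔ x ∈ l₁ ⊔ l₂ := by
    intro x
    have hdiff : x - P₁ x ∈ l₁ ⊔ l₂ := by
      apply Submodule.mem_sup_left
      rw [← hker, LinearMap.mem_ker, map_sub, ContinuousLinearMap.coe_coe, hPP, sub_self]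
    constructor
    · intro h
      have := Submodule.add_mem _ hdiff h
      simpa using this
    · intro h
      have := Submodule.sub_mem _ h hdiff
      simpa using this
  -- closedness equivalence
  have hclosed : IsClosed ((l₁ ⊔ l₂ : Submodule ℝ H) : Set H) ↔
      IsClosed ((LinearMap.range (T : ↥l₂ →ₗ[ℝ] ↥(l₁ᗮ)) : Submodule ℝ ↥(l₁ᗮ)) : Set ↥(l₁ᗮ)) := by
    constructor
    · intro h
      have hs : ((LinearMap.range (T : ↥l₂ →ₗ[ℝ] ↥(l₁ᗮ)) : Submodule ℝ ↥(l₁ᗮ)) : Set ↥(l₁ᗮ)) =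
          Subtype.val ⁻¹' ((l₁ ⊔ l₂ : Submodule ℝ H) : Set H) := by
        ext x; exact hrange x
      rw [hs]
      exact h.preimage continuous_subtype_val
    · intro h
      have hcl : IsClosed
          (Subtype.val '' ((LinearMap.range (T : ↥l₂ →ₗ[ℝ] ↥(l₁ᗮ)) : Submodule ℝ ↥(l₁ᗮ)) : Set ↥(l₁ᗮ))) :=
        (l₁.isClosed_orthogonal.isClosedEmbedding_subtypeVal.isClosedMap) _ h
      have hs : ((l₁ ⊔ l₂ : Submodule ℝ H) : Set H) =
          P₁ ⁻¹' (Subtype.val '' ((LinearMap.range (T : ↥l₂ →ₗ[ℝ] ↥(l₁ᗮ)) : Submodule ℝ ↥(l₁ᗮ)) : Set ↥(l₁ᗮ))) := by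
        ext x
        simp only [Set.mem_preimage, Set.mem_image, SetLike.mem_coe]
        constructor
        · intro hx
          refine ⟨⟨P₁ x, hmem x⟩, (hrange _).mpr ?_, rfl⟩
          exact (hPsup x).mpr hx
        · rintro ⟨z, hz, hzx⟩
          have : (z : H) ∈ l₁ ⊔ l₂ := (hrange z).mp hz
          rw [hzx] at this
          exact (hPsup x).mp this
      rw [hs]
      exact hcl.preimage P₁.continuous
  -- kernel of `T`
  have hkerT : LinearMap.ker (T : ↥l₂ →ₗ[ℝ] ↥(l₁ᗮ)) = (l₁ ⊓ l₂).comap l₂.subtype := by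
    ext x
    simp only [LinearMap.mem_ker, Submodule.mem_comap, Submodule.mem_inf,
      Submodule.subtype_apply]
    constructor
    · intro hx
      refine ⟨?_, x.2⟩
      rw [← hker, LinearMap.mem_ker, ContinuousLinearMap.coe_coe, ← hT]; rw [ContinuousLinearMap.coe_coe] at hx; rw [hx, Submodule.coe_zero]
    · rintro ⟨h1, -⟩
      have : P₁ (x : H) = 0 := by rw [← ContinuousLinearMap.coe_coe P₁, ← LinearMap.mem_ker (f := (P₁ : H →ₗ[ℝ] H)), hker]; exact h1
      ext
      rw [ContinuousLinearMap.coe_coe, hT, this, Submodule.coe_zero]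
  -- equivalence between the kernels
  let ek : ↥(LinearMap.ker (T : ↥l₂ →ₗ[ℝ] ↥(l₁ᗮ))) ≃ₗ[ℝ] ↥(l₁ ⊓ l₂) :=
    (LinearEquiv.ofEq _ _ hkerT).trans (Submodule.comapSubtypeEquivOfLe inf_le_right)
  -- equivalence between the cokernels
  let P' : H →ₗ[ℝ] ↥(l₁ᗮ) := (P₁ : H →ₗ[ℝ] H).codRestrict l₁ᗮ hmem
  let f : H →ₗ[ℝ] (↥(l₁ᗮ) ⧸ (LinearMap.range (T : ↥l₂ →ₗ[ℝ] ↥(l₁ᗮ)) : Submodule ℝ ↥(l₁ᗮ))) :=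
    (LinearMap.range (T : ↥l₂ →ₗ[ℝ] ↥(l₁ᗮ)) : Submodule ℝ ↥(l₁ᗮ)).mkQ ∘ₗ P'
  have hfsurj : Function.Surjective f := by
    intro q
    obtain ⟨z, rfl⟩ := Submodule.mkQ_surjective _ q
    refine ⟨(z : H), ?_⟩
    have : P' (z : H) = z := by
      ext
      exact hfix _ z.2
    simp [f, this]
  have hfker : LinearMap.ker f = l₁ ⊔ l₂ := by
    ext x
    simp only [f, LinearMap.mem_ker, LinearMap.comp_apply, Submodule.mkQ_apply,
      Submodule.Quotient.mk_eq_zero]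
    rw [hrange]
    exact hPsup x
  let e : (H ⧸ (l₁ ⊔ l₂)) ≃ₗ[ℝ] (↥(l₁ᗮ) ⧸ (LinearMap.range (T : ↥l₂ →ₗ[ℝ] ↥(l₁ᗮ)) : Submodule ℝ ↥(l₁ᗮ))) :=
    (Submodule.quotEquivOfEq _ _ hfker.symm).trans (f.quotKerEquivOfSurjective hfsurj)
  refine ⟨?_, hkerT, e.symm.rank_eq, ?_⟩
  · constructor
    · rintro ⟨h1, h2, h3⟩
      refine ⟨?_, hclosed.mp h2, ?_⟩
      · exact ek.symm.finiteDimensional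
      · exact e.finiteDimensional
    · rintro ⟨h1, h2, h3⟩
      refine ⟨?_, hclosed.mpr h2, ?_⟩
      · exact ek.finiteDimensional
      · exact e.symm.finiteDimensional
  · intro _
    rw [ek.finrank_eq, e.symm.finrank_eq]
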